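/- For α ∈ (0,1], λ > 0, the function p ↦ p·Γ(1+α/2)·W(-p; -α/2, 1-α/2)/(1 - W(-p; -α/2, 1)) is continuous on (0, p_max) where p_max is the smallest positive zero of 1 - W(-p; -α/2, 1) (with p_max = +∞ if none exists); in the case α = 1 this reduces to continuity of p ↦ (p√π/2) e^{p²/4} erf(p/2) on (0,∞), which is strictly increasing, tends to 0 as p → 0⁺ and to ∞ as p → ∞, so for each λ > 0 the equation λ = (p√π/2) e^{p²/4} erf(p/2) has a unique positive solution p. -/

import Mathlib

open Filter Set

/-- The two-parameter Wright function with real parameters and argument. -/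
noncomputable def wrightR (γ δ z : ℝ) : ℝ :=
  ∑' k : ℕ, z ^ k / ((k.factorial : ℝ) * Real.Gamma (γ * k + δ))

/-- The error function `erf(x) = (2/√π) ∫₀ˣ e^{-t²} dt`. -/
noncomputable def erf (x : ℝ) : ℝ :=
  (2 / Real.sqrt Real.pi) * ∫ t in (0:ℝ)..x, Real.exp (-t ^ 2)

section Aux

private lemma gamma_midpoint (k : ℕ) :
    Real.Gamma ((k : ℝ)/2 + 2) ≤ Real.sqrt ((k+1).factorial) := by
  have h2 : (2:ℝ) ∈ Ioi (0:ℝ) := by norm_num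
  have hk2 : ((k:ℝ) + 2) ∈ Ioi (0:ℝ) := mem_Ioi.mpr (by positivity)
  have hc := Real.convexOn_log_Gamma.2 h2 hk2 (by norm_num : (0:ℝ) ≤ 1/2)
      (by norm_num : (0:ℝ) ≤ 1/2) (by norm_num)
  simp only [Function.comp_apply, smul_eq_mul] at hc
  have hmid : (1/2 : ℝ) * 2 + (1/2) * ((k:ℝ)+2) = (k:ℝ)/2 + 2 := by ring
  have hG2 : Real.Gamma 2 = 1 := by
    rw [show (2:ℝ) = ((1:ℕ):ℝ)+1 by norm_num, Real.Gamma_nat_eq_factorial]; simp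
  have hGk : Real.Gamma ((k:ℝ)+2) = ((k+1).factorial : ℝ) := by
    rw [show ((k:ℝ)+2) = ((k+1:ℕ):ℝ)+1 by push_cast; ring, Real.Gamma_nat_eq_factorial]
  rw [hmid, hG2, Real.log_one, hGk] at hc
  have hpos : 0 < Real.Gamma ((k:ℝ)/2+2) := Real.Gamma_pos_of_pos (by positivity)
  have hfpos : (0:ℝ) < ((k+1).factorial : ℝ) := by exact_mod_cast (k+1).factorial_pos
  rw [Real.le_sqrt hpos.le hfpos.le, ← Real.log_le_log_iff (by positivity) hfpos,
    Real.log_pow]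
  push_cast
  linarith

private lemma summable_aux {R : ℝ} (hR : 0 < R) :
    Summable (fun k : ℕ => R ^ k * Real.sqrt (((k+1).factorial : ℕ)) / ((k.factorial : ℕ) : ℝ)) := by
  apply summable_of_ratio_norm_eventually_le (r := 1/2) (by norm_num)
  obtain ⟨N, hN⟩ := exists_nat_ge (4*R^2 + 4)
  filter_upwards [eventually_ge_atTop N] with k hk
  have hkR : 4*R^2 + 4 ≤ (k:ℝ) := le_trans hN (by exact_mod_cast hk)
  have h1 : (0:ℝ) < (k.factorial : ℝ) := by exact_mod_cast k.factorial_pos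
  have hsq : 4*R^2*((k:ℝ)+2) ≤ ((k:ℝ)+1)^2 := by
    nlinarith [sq_nonneg R, mul_le_mul_of_nonneg_left hkR (Nat.cast_nonneg k : (0:ℝ) ≤ (k:ℝ))]
  have hsqrt : Real.sqrt ((k:ℝ)+2) ≤ ((k:ℝ)+1)/(2*R) := by
    have h' : ((k:ℝ)+2) ≤ (((k:ℝ)+1)/(2*R))^2 := by
      rw [div_pow, le_div_iff₀ (by positivity)]; nlinarith
    calc Real.sqrt ((k:ℝ)+2) ≤ Real.sqrt ((((k:ℝ)+1)/(2*R))^2) := Real.sqrt_le_sqrt h'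
    _ = ((k:ℝ)+1)/(2*R) := Real.sqrt_sq (by positivity)
  have key : R * Real.sqrt ((k:ℝ)+2) ≤ ((k:ℝ)+1)/2 := by
    calc R * Real.sqrt ((k:ℝ)+2) ≤ R * (((k:ℝ)+1)/(2*R)) := by
          exact mul_le_mul_of_nonneg_left hsqrt hR.le
    _ = ((k:ℝ)+1)/2 := by field_simp
  have hfact : (((k+2).factorial : ℕ) : ℝ) = ((k:ℝ)+2) * (((k+1).factorial : ℕ) : ℝ) := by
    rw [show k+2 = (k+1)+1 from rfl, Nat.factorial_succ]; push_cast; ring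
  have hfact' : (((k+1).factorial : ℕ) : ℝ) = ((k:ℝ)+1) * ((k.factorial : ℕ) : ℝ) := by
    rw [Nat.factorial_succ]; push_cast; ring
  have hs : Real.sqrt (((k+2).factorial : ℕ))
      = Real.sqrt ((k:ℝ)+2) * Real.sqrt (((k+1).factorial : ℕ)) := by
    rw [hfact, Real.sqrt_mul (by positivity)]
  rw [Real.norm_eq_abs, Real.norm_eq_abs, abs_of_nonneg (by positivity),
    abs_of_nonneg (by positivity)]
  rw [show k+1+1 = k+2 from rfl, hs]
  have expand : R^(k+1) * (Real.sqrt ((k:ℝ)+2) * Real.sqrt (((k+1).factorial : ℕ))) / (((k+1).factorial : ℕ) : ℝ)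
      = (R * Real.sqrt ((k:ℝ)+2) / ((k:ℝ)+1)) * (R^k * Real.sqrt (((k+1).factorial : ℕ)) / ((k.factorial : ℕ) : ℝ)) := by
    rw [hfact']; field_simp; ring
  rw [expand]
  have hhalf : R * Real.sqrt ((k:ℝ)+2) / ((k:ℝ)+1) ≤ 1/2 := by
    rw [div_le_iff₀ (by positivity)]; linarith
  exact mul_le_mul_of_nonneg_right hhalf (by positivity)

private lemma summable_wright_bound (γ δ : ℝ) (hγl : -(1/2:ℝ) ≤ γ) (hγ0 : γ < 0) (hδ0 : 0 ≤ δ)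
    {R : ℝ} (hR : 0 < R) :
    Summable (fun k : ℕ => R ^ k / ((k.factorial : ℝ) * |Real.Gamma (γ * k + δ)|)) := by
  refine Summable.of_norm_bounded_eventually_nat (summable_aux hR) ?_
  obtain ⟨N, hN⟩ := exists_nat_ge ((1 + δ)/(-γ))
  filter_upwards [eventually_ge_atTop N] with k hk
  have hkN : ((1+δ)/(-γ)) ≤ (k:ℝ) := le_trans hN (by exact_mod_cast hk)
  have hγpos : (0:ℝ) < -γ := by linarith
  have hgk : 1 + δ ≤ (-γ) * k := by
    rw [div_le_iff₀ hγpos] at hkN; linarith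
  set x := γ * k + δ with hxdef
  have hx2 : (2:ℝ) ≤ 1 - x := by simp only [hxdef]; linarith
  have hxk : 1 - x ≤ (k:ℝ)/2 + 2 := by
    have h' : (-γ) * k ≤ (1/2) * k := mul_le_mul_of_nonneg_right (by linarith) (Nat.cast_nonneg k)
    simp only [hxdef]; linarith
  rw [Real.norm_eq_abs, abs_of_nonneg (by positivity)]
  rcases eq_or_ne (Real.Gamma x) 0 with h0 | h0
  · rw [h0]; simp; positivity
  have hsin : Real.sin (Real.pi * x) ≠ 0 := by
    intro hs
    rw [Real.sin_eq_zero_iff] at hs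
    obtain ⟨n, hn⟩ := hs
    have hxn : x = (n:ℝ) := (mul_left_cancel₀ Real.pi_ne_zero (by linarith)).symm
    have hn1 : (n:ℝ) ≤ -1 := by rw [← hxn]; linarith
    have hn0 : 0 ≤ -n := by exact_mod_cast (show (0:ℝ) ≤ ((-n : ℤ):ℝ) by push_cast; linarith)
    have hm : ((((-n).toNat : ℕ)):ℝ) = -(n:ℝ) := by
      have := Int.toNat_of_nonneg hn0
      exact_mod_cast congrArg (fun z : ℤ => (z:ℝ)) this
    apply h0
    rw [hxn, show (n:ℝ) = -(((-n).toNat : ℕ):ℝ) by rw [hm]; ring]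
    exact Real.Gamma_neg_nat_eq_zero _
  have h1x : 0 < Real.Gamma (1 - x) := Real.Gamma_pos_of_pos (by linarith)
  have hrefl := Real.Gamma_mul_Gamma_one_sub x
  have habs : |Real.Gamma x| * Real.Gamma (1-x) = Real.pi / |Real.sin (Real.pi * x)| := by
    rw [← abs_of_pos h1x, ← abs_mul, hrefl, abs_div, abs_of_pos Real.pi_pos]
  have hsin1 : |Real.sin (Real.pi * x)| ≤ 1 := abs_le.mpr ⟨Real.neg_one_le_sin _, Real.sin_le_one _⟩
  have hsinpos : 0 < |Real.sin (Real.pi * x)| := abs_pos.mpr hsin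
  have hge : Real.pi ≤ |Real.Gamma x| * Real.Gamma (1-x) := by
    rw [habs]
    calc Real.pi = Real.pi / 1 := (div_one _).symm
    _ ≤ Real.pi / |Real.sin (Real.pi * x)| :=
        div_le_div_of_nonneg_left Real.pi_pos.le hsinpos hsin1
  have hGx : 0 < |Real.Gamma x| := abs_pos.mpr h0
  have hinv : 1 / |Real.Gamma x| ≤ Real.Gamma (1-x) := by
    rw [div_le_iff₀ hGx]
    nlinarith [Real.pi_gt_three]
  have hmono : Real.Gamma (1-x) ≤ Real.Gamma ((k:ℝ)/2+2) :=
    Real.Gamma_strictMonoOn_Ici.monotoneOn (mem_Ici.mpr hx2)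
      (mem_Ici.mpr (by linarith [Nat.cast_nonneg (α := ℝ) k] : (2:ℝ) ≤ (k:ℝ)/2+2)) hxk
  have hchain : 1 / |Real.Gamma x| ≤ Real.sqrt (((k+1).factorial : ℕ)) :=
    hinv.trans (hmono.trans (gamma_midpoint k))
  calc R^k / ((k.factorial : ℝ) * |Real.Gamma x|)
      = (R^k / (k.factorial : ℝ)) * (1 / |Real.Gamma x|) := by
        rw [div_mul_eq_div_div, div_eq_mul_one_div]
  _ ≤ (R^k / (k.factorial : ℝ)) * Real.sqrt (((k+1).factorial : ℕ)) :=
        mul_le_mul_of_nonneg_left hchain (by positivity)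
  _ = R^k * Real.sqrt (((k+1).factorial : ℕ)) / (k.factorial : ℝ) := by ring

private lemma wright_contOn (γ δ : ℝ) (hγl : -(1/2:ℝ) ≤ γ) (hγ0 : γ < 0) (hδ0 : 0 ≤ δ)
    {pmax : ℝ} (hp : 0 < pmax) :
    ContinuousOn (fun p : ℝ => wrightR γ δ (-p)) (Ioo (0:ℝ) pmax) := by
  simp only [wrightR]
  apply continuousOn_tsum
      (u := fun k : ℕ => pmax ^ k / ((k.factorial : ℝ) * |Real.Gamma (γ * k + δ)|))
  · intro k
    exact (((continuous_neg.pow k).div_const _).continuousOn :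
      ContinuousOn (fun p : ℝ => (-p)^k / ((k.factorial : ℝ) * Real.Gamma (γ * k + δ))) _)
  · exact summable_wright_bound γ δ hγl hγ0 hδ0 hp
  · intro k p hpmem
    rw [Real.norm_eq_abs, abs_div, abs_mul, abs_pow, abs_neg, Nat.abs_cast,
      abs_of_pos hpmem.1]
    rcases eq_or_ne (Real.Gamma (γ * k + δ)) 0 with h | h
    · simp [h]
    · have hc : (0:ℝ) < (k.factorial : ℝ) * |Real.Gamma (γ * k + δ)| :=
        mul_pos (by exact_mod_cast k.factorial_pos) (abs_pos.mpr h)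
      exact (div_le_div_iff_of_pos_right hc).mpr (pow_le_pow_left₀ hpmem.1.le hpmem.2.le k)

private lemma hint : ∀ a b : ℝ,
    IntervalIntegrable (fun t => Real.exp (-t^2)) MeasureTheory.volume a b :=
  fun a b => (Continuous.intervalIntegrable (by continuity) a b)

private lemma erf_cont : Continuous erf := by
  unfold erf
  exact continuous_const.mul (intervalIntegral.continuous_primitive hint 0)

private lemma erf_zero : erf 0 = 0 := by simp [erf]

private lemma erf_strictMono : StrictMono erf := by
  intro a b hab
  unfold erf
  have hc : 0 < 2 / Real.sqrt Real.pi := by positivity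
  apply mul_lt_mul_of_pos_left _ hc
  have hadd := intervalIntegral.integral_add_adjacent_intervals (hint 0 a) (hint a b)
  have hpos : 0 < ∫ t in a..b, Real.exp (-t^2) :=
    intervalIntegral.intervalIntegral_pos_of_pos (hint a b) (fun x => Real.exp_pos _) hab
  linarith

private lemma G_cont :
    Continuous (fun p : ℝ => p * Real.sqrt Real.pi / 2 * Real.exp (p^2/4) * erf (p/2)) := by
  refine Continuous.mul (Continuous.mul ?_ ?_) ?_
  · exact (continuous_id.mul continuous_const).div_const 2
  · exact Real.continuous_exp.comp ((continuous_pow 2).div_const 4)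
  · exact erf_cont.comp (continuous_id.div_const 2)

private lemma G_zero :
    (0:ℝ) * Real.sqrt Real.pi / 2 * Real.exp ((0:ℝ)^2/4) * erf (0/2) = 0 := by
  norm_num

private lemma G_mono :
    StrictMonoOn (fun p : ℝ => p * Real.sqrt Real.pi / 2 * Real.exp (p^2/4) * erf (p/2))
      (Ioi 0) := by
  intro x hx y hy hxy
  simp only [mem_Ioi] at hx hy
  have hπ : 0 < Real.sqrt Real.pi := Real.sqrt_pos.mpr Real.pi_pos
  have e1 : x * Real.sqrt Real.pi / 2 < y * Real.sqrt Real.pi / 2 := by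
    have := mul_lt_mul_of_pos_right hxy hπ; linarith
  have e2 : Real.exp (x^2/4) < Real.exp (y^2/4) := by
    apply Real.exp_lt_exp.mpr
    have : x^2 < y^2 := by nlinarith
    linarith
  have e3 : erf (x/2) < erf (y/2) := erf_strictMono (by linarith)
  have herf : 0 < erf (x/2) := by
    have := erf_strictMono (show (0:ℝ) < x/2 by linarith)
    rwa [erf_zero] at this
  have hA : x * Real.sqrt Real.pi / 2 * Real.exp (x^2/4)
      < y * Real.sqrt Real.pi / 2 * Real.exp (y^2/4) :=
    mul_lt_mul'' e1 e2 (by positivity) (Real.exp_pos _).le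
  exact mul_lt_mul'' hA e3 (by positivity) herf.le

private lemma G_top :
    Tendsto (fun p : ℝ => p * Real.sqrt Real.pi / 2 * Real.exp (p^2/4) * erf (p/2))
      atTop atTop := by
  have herf1 : 0 < erf (1/2) := by
    have := erf_strictMono (show (0:ℝ) < 1/2 by norm_num)
    rwa [erf_zero] at this
  have hπ : 0 < Real.sqrt Real.pi := Real.sqrt_pos.mpr Real.pi_pos
  have hc : 0 < Real.sqrt Real.pi / 2 * erf (1/2) := by positivity
  apply tendsto_atTop_mono' atTop ?_ (Tendsto.const_mul_atTop hc tendsto_id)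
  filter_upwards [eventually_ge_atTop (1:ℝ)] with p hp
  have hp0 : (0:ℝ) < p := lt_of_lt_of_le one_pos hp
  have h1 : (1:ℝ) ≤ Real.exp (p^2/4) := Real.one_le_exp (by positivity)
  have h2 : erf (1/2) ≤ erf (p/2) := erf_strictMono.monotone (by linarith)
  have hA : 0 ≤ p * Real.sqrt Real.pi / 2 := by positivity
  have key : (p * Real.sqrt Real.pi / 2 * 1) * erf (1/2)
      ≤ (p * Real.sqrt Real.pi / 2 * Real.exp (p^2/4)) * erf (p/2) := by
    apply mul_le_mul ?_ h2 herf1.le ?_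
    · exact mul_le_mul_of_nonneg_left h1 hA
    · positivity
  calc Real.sqrt Real.pi / 2 * erf (1/2) * id p
      = (p * Real.sqrt Real.pi / 2 * 1) * erf (1/2) := by simp [id]; ring
  _ ≤ _ := key

end Aux

/-- Solvability of the transcendental equation for the front coefficient `p`:
the map `p ↦ p Γ(1+α/2) W(-p;-α/2,1-α/2)/(1 - W(-p;-α/2,1))` is continuous on
any interval `(0, p_max)` on which `1 - W(-p;-α/2,1)` does not vanish (this
covers `p_max` the smallest positive zero, or `p_max = ∞` if none exists);
for `α = 1` it reduces to `G(p) = (p√π/2) e^{p²/4} erf(p/2)`, which is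
continuous and strictly increasing on `(0,∞)`, tends to `0` as `p → 0⁺` and to
`∞` as `p → ∞`, so for each `λ > 0` the equation `λ = G(p)` has a unique
positive solution. -/
theorem transcendental_equation_solvability (α : ℝ) (hα : 0 < α) (hα1 : α ≤ 1) :
    (∀ pmax : ℝ,
      (∀ q ∈ Ioo (0:ℝ) pmax, 1 - wrightR (-(α/2)) 1 (-q) ≠ 0) →
      ContinuousOn (fun p : ℝ =>
          p * Real.Gamma (1 + α/2) * wrightR (-(α/2)) (1 - α/2) (-p) /
            (1 - wrightR (-(α/2)) 1 (-p)))
        (Ioo 0 pmax)) ∧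
    (α = 1 →
      (ContinuousOn
          (fun p : ℝ => p * Real.sqrt Real.pi / 2 * Real.exp (p^2/4) * erf (p/2))
          (Ioi 0) ∧
        StrictMonoOn
          (fun p : ℝ => p * Real.sqrt Real.pi / 2 * Real.exp (p^2/4) * erf (p/2))
          (Ioi 0) ∧
        Tendsto (fun p : ℝ => p * Real.sqrt Real.pi / 2 * Real.exp (p^2/4) * erf (p/2))
          (nhdsWithin 0 (Ioi 0)) (nhds 0) ∧
        Tendsto (fun p : ℝ => p * Real.sqrt Real.pi / 2 * Real.exp (p^2/4) * erf (p/2))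
          atTop atTop ∧
        ∀ lam : ℝ, 0 < lam → ∃! p : ℝ, 0 < p ∧
          lam = p * Real.sqrt Real.pi / 2 * Real.exp (p^2/4) * erf (p/2))) := by
  constructor
  · intro pmax hne
    rcases le_or_gt pmax 0 with h | h
    · rw [Ioo_eq_empty (not_lt.mpr h)]
      exact continuousOn_empty _
    · have hW1 := wright_contOn (-(α/2)) (1 - α/2) (by linarith) (by linarith) (by linarith) h
      have hW2 := wright_contOn (-(α/2)) 1 (by linarith) (by linarith) (by norm_num) h
      exact ((continuousOn_id.mul continuousOn_const).mul hW1).div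
        (continuousOn_const.sub hW2) (fun q hq => hne q hq)
  · intro hα'
    refine ⟨G_cont.continuousOn, G_mono, ?_, G_top, ?_⟩
    · have h0 : Tendsto (fun p : ℝ => p * Real.sqrt Real.pi / 2 * Real.exp (p^2/4) * erf (p/2))
          (nhds 0) (nhds 0) := by
        have := G_cont.tendsto 0
        rwa [G_zero] at this
      exact h0.mono_left nhdsWithin_le_nhds
    · intro lam hlam
      obtain ⟨b, hb, hb1⟩ :=
        ((G_top.eventually_ge_atTop lam).and (eventually_ge_atTop (1:ℝ))).exists
      have hb0 : (0:ℝ) ≤ b := le_trans zero_le_one hb1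
      have hmem : lam ∈ Icc ((fun p : ℝ => p * Real.sqrt Real.pi / 2 * Real.exp (p^2/4) * erf (p/2)) 0)
          ((fun p : ℝ => p * Real.sqrt Real.pi / 2 * Real.exp (p^2/4) * erf (p/2)) b) := by
        constructor
        · simp only [G_zero]; exact hlam.le
        · exact hb
      obtain ⟨p, hpmem, hpG⟩ := intermediate_value_Icc hb0 G_cont.continuousOn hmem
      have hppos : 0 < p := by
        rcases hpmem.1.lt_or_eq with h | h
        · exact h
        · exfalso; rw [← h] at hpG; simp only [G_zero] at hpG; exact hlam.ne' hpG.symm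
      refine ⟨p, ⟨hppos, hpG.symm⟩, ?_⟩
      rintro q ⟨hq, hqe⟩
      exact G_mono.injOn (mem_Ioi.mpr hq) (mem_Ioi.mpr hppos) (by rw [← hqe]; exact hpG.symm)
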